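/- Let W₁ = U₁S₁V₁ᵀ and W₂ = U₂S₂U₁ᵀ be n×n real matrices given in singular value decomposition form with the alignment condition V₂ = U₁ (U₁, V₁, U₂ orthogonal, S₁ = diag(σ₁^k), S₂ = diag(σ₂^k)), let X be an n×n real matrix, and set G := −W₂W₁X. Suppose the singular values evolve by σ̇₁^k = (u₁^k)ᵀẆ₁v₁^k with Ẇ₁ = −W₂ᵀG, and σ̇₂^k = (u₂^k)ᵀẆ₂v₂^k with Ẇ₂ = −GW₁ᵀ, where u_l^k, v_l^k denote the k-th columns of U_l, V_l. Then for every k: σ̇₁^k = σ₁^k (σ₂^k)² ( (v₁^k)ᵀ X v₁^k ) and σ̇₂^k = σ₂^k (σ₁^k)² ( (v₁^k)ᵀ X v₁^k ). In particular, if X is positive semidefinite, both derivatives have the same sign as σ₁^k σ₂^k · σ₂^k resp. σ₁^k, and the factor (v₁^k)ᵀXv₁^k is nonnegative. -/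

import Mathlib

open Matrix

lemma colDot {n : ℕ} (A M B : Matrix (Fin n) (Fin n) ℝ) (k : Fin n) :
    (fun a => A a k) ⬝ᵥ (M *ᵥ fun a => B a k) = (Aᵀ * M * B) k k := by
  simp only [dotProduct, mulVec, Matrix.mul_apply, transpose_apply,
    Finset.sum_mul, Finset.mul_sum]
  rw [Finset.sum_comm]
  exact Finset.sum_congr rfl fun i _ => Finset.sum_congr rfl fun j _ => by ring

/-- **Theorem (aligned singular value dynamics).**
Let `W₁ = U₁ S₁ V₁ᵀ` and `W₂ = U₂ S₂ U₁ᵀ` (alignment `V₂ = U₁`), set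
`G = −W₂ W₁ X`, and suppose the singular values evolve by
`σ̇₁^k = (u₁^k)ᵀ Ẇ₁ v₁^k` with `Ẇ₁ = −W₂ᵀ G` and
`σ̇₂^k = (u₂^k)ᵀ Ẇ₂ v₂^k` with `Ẇ₂ = −G W₁ᵀ` (and `v₂^k = u₁^k`).  Then
`σ̇₁^k = σ₁^k (σ₂^k)² ((v₁^k)ᵀ X v₁^k)` and
`σ̇₂^k = σ₂^k (σ₁^k)² ((v₁^k)ᵀ X v₁^k)`; moreover if `X` is positive
semidefinite then the common factor `(v₁^k)ᵀ X v₁^k` is nonnegative. -/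
theorem aligned_singular_value_dynamics (n : ℕ)
    (W₁ U₁ S₁ V₁ W₂ U₂ S₂ X G : Matrix (Fin n) (Fin n) ℝ)
    (hSVD₁ : W₁ = U₁ * S₁ * V₁ᵀ) (hSVD₂ : W₂ = U₂ * S₂ * U₁ᵀ)
    (hU₁orth : U₁ᵀ * U₁ = 1) (hV₁orth : V₁ᵀ * V₁ = 1) (hU₂orth : U₂ᵀ * U₂ = 1)
    (σ₁ σ₂ : Fin n → ℝ)
    (hS₁ : S₁ = diagonal σ₁) (hS₂ : S₂ = diagonal σ₂)
    (hG : G = -(W₂ * W₁ * X))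
    (dσ₁ dσ₂ : Fin n → ℝ)
    (hdσ₁ : ∀ k, dσ₁ k =
      (fun a => U₁ a k) ⬝ᵥ ((-(W₂ᵀ) * G) *ᵥ fun a => V₁ a k))
    (hdσ₂ : ∀ k, dσ₂ k =
      (fun a => U₂ a k) ⬝ᵥ ((-G * W₁ᵀ) *ᵥ fun a => U₁ a k)) :
    (∀ k, dσ₁ k = σ₁ k * (σ₂ k) ^ 2 *
        ((fun a => V₁ a k) ⬝ᵥ (X *ᵥ fun a => V₁ a k))) ∧
    (∀ k, dσ₂ k = σ₂ k * (σ₁ k) ^ 2 *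
        ((fun a => V₁ a k) ⬝ᵥ (X *ᵥ fun a => V₁ a k))) ∧
    (X.PosSemidef → ∀ k, 0 ≤ (fun a => V₁ a k) ⬝ᵥ (X *ᵥ fun a => V₁ a k)) := by
  subst hS₁ hS₂ hSVD₁ hSVD₂ hG
  have key₁ : U₁ᵀ * (-(U₂ * diagonal σ₂ * U₁ᵀ)ᵀ *
        -(U₂ * diagonal σ₂ * U₁ᵀ * (U₁ * diagonal σ₁ * V₁ᵀ) * X)) * V₁ =
      diagonal σ₂ * (diagonal σ₂ * (diagonal σ₁ * (V₁ᵀ * X * V₁))) := by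
    simp only [neg_mul, mul_neg, neg_neg, transpose_mul, transpose_transpose,
      diagonal_transpose, Matrix.mul_assoc]
    rw [← Matrix.mul_assoc U₂ᵀ U₂, hU₂orth, Matrix.one_mul,
        ← Matrix.mul_assoc U₁ᵀ U₁, hU₁orth, Matrix.one_mul,
        ← Matrix.mul_assoc U₁ᵀ U₁, hU₁orth, Matrix.one_mul]
  have key₂ : U₂ᵀ * (-(-(U₂ * diagonal σ₂ * U₁ᵀ * (U₁ * diagonal σ₁ * V₁ᵀ) * X)) *
        (U₁ * diagonal σ₁ * V₁ᵀ)ᵀ) * U₁ =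
      diagonal σ₂ * (diagonal σ₁ * (V₁ᵀ * X * V₁ * diagonal σ₁)) := by
    simp only [neg_neg, transpose_mul, transpose_transpose,
      diagonal_transpose, Matrix.mul_assoc]
    rw [← Matrix.mul_assoc U₂ᵀ U₂, hU₂orth, Matrix.one_mul,
        ← Matrix.mul_assoc U₁ᵀ U₁, hU₁orth, Matrix.one_mul,
        Matrix.mul_one]
  refine ⟨fun k => ?_, fun k => ?_, fun hX k => ?_⟩
  · rw [hdσ₁ k, colDot, key₁, colDot]
    simp only [Matrix.diagonal_mul]
    ring
  · rw [hdσ₂ k, colDot, key₂, colDot]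
    simp only [Matrix.diagonal_mul, Matrix.mul_diagonal]
    ring
  · simpa using hX.dotProduct_mulVec_nonneg (fun a => V₁ a k)
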